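/- arXiv:1610.09296 — 3 statements merged into one kernel-verified Lean document; each statement's English description precedes it below -/
import Mathlib

section
/- Let Z be a measurable space with σ-finite measure λ, and let T : Z → Z be a Markov kernel admitting a measurable, everywhere strictly positive density t : Z × Z → ℝ≥0∞ with respect to λ, i.e. T(z)(A) = ∫_A t(z, z') dλ(z') for all z and measurable A. Then for every n ≥ 1, every z ∈ Z, and every measurable set A with λ(A) > 0, the n-step kernel satisfies Tⁿ(z)(A) > 0, where Tⁿ denotes the n-fold composition of T with itself. -/
open MeasureTheory ProbabilityTheory
open scoped ENNReal

/-- The `n`-fold self-composition of a kernel (`kernelIter T n = T ∘ₖ ⋯ ∘ₖ T`,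
`n` times). -/
noncomputable def kernelIter {Z : Type*} [MeasurableSpace Z]
    (T : Kernel Z Z) : ℕ → Kernel Z Z
  | 0 => Kernel.id
  | n + 1 => T ∘ₖ kernelIter T n

lemma kernelIter_isMarkov {Z : Type*} [MeasurableSpace Z]
    (T : Kernel Z Z) [IsMarkovKernel T] (n : ℕ) :
    IsMarkovKernel (kernelIter T n) := by
  induction n with
  | zero => rw [kernelIter]; infer_instance
  | succ n ih => rw [kernelIter]; haveI := ih; infer_instance

/-- Lemma 2 (ergodicity): if a Markov kernel `T` has an everywhere strictly
positive density `t` with respect to a σ-finite reference measure `λ`, then for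
every `n ≥ 1`, every state `z` and every set `A` of positive reference measure,
the `n`-step kernel satisfies `Tⁿ(z)(A) > 0`. -/
theorem nstep_kernel_pos
    {Z : Type*} [MeasurableSpace Z] (lambda : Measure Z) [SigmaFinite lambda]
    (T : Kernel Z Z) [IsMarkovKernel T]
    (t : Z × Z → ℝ≥0∞) (ht : Measurable t) (htpos : ∀ z z', 0 < t (z, z'))
    (hT : ∀ z (A : Set Z), MeasurableSet A → T z A = ∫⁻ z' in A, t (z, z') ∂lambda) :
    ∀ n : ℕ, 1 ≤ n → ∀ z (A : Set Z), MeasurableSet A → 0 < lambda A →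
      0 < (kernelIter T n) z A := by
  intro n hn z A hA hlA
  -- one-step positivity
  have hstep : ∀ y : Z, 0 < T y A := by
    intro y
    rw [hT y A hA]
    refine (lintegral_pos_iff_support (f := fun z' => t (y, z')) ?_).mpr ?_
    · exact ht.comp measurable_prodMk_left
    · have hsupp : Function.support (fun z' => t (y, z')) = Set.univ :=
        Set.eq_univ_of_forall fun z' => (htpos y z').ne'
      rw [hsupp, Measure.restrict_apply_univ]
      exact hlA
  obtain ⟨m, rfl⟩ := Nat.exists_eq_add_of_le hn
  rw [add_comm]
  show 0 < (kernelIter T (m + 1)) z A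
  rw [kernelIter, Kernel.comp_apply' _ _ _ hA]
  haveI := kernelIter_isMarkov T m
  rw [lintegral_pos_iff_support (T.measurable_coe hA)]
  have hsupp : Function.support (fun y => T y A) = Set.univ :=
    Set.eq_univ_of_forall fun y => (hstep y).ne'
  rw [hsupp]
  simp
end

section
/- Let Z be a measurable space and T : Z → Z a Markov kernel satisfying a Doeblin minorization condition: there exist ε ∈ (0, 1] and a probability measure ρ on Z such that T(z)(A) ≥ ε · ρ(A) for every z ∈ Z and measurable A. Then there exists a unique probability measure π on Z that is invariant for T, i.e. π.bind T = π. -/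
set_option linter.unusedSectionVars false


open MeasureTheory ProbabilityTheory Filter
open scoped ENNReal Topology

namespace DoeblinAux

variable {Z : Type*} [MeasurableSpace Z]

/-- The residual sequence: `μ 0 = μ0`, `μ (n+1) = μ n ∘ T  -  ε (μ n univ) ρ`. -/
noncomputable def seq (T : Kernel Z Z) (ε : ℝ≥0∞) (ρ : Measure Z) (μ0 : Measure Z) :
    ℕ → Measure Z
  | 0 => μ0
  | n + 1 => (seq T ε ρ μ0 n).bind T - (ε * seq T ε ρ μ0 n Set.univ) • ρ

variable (T : Kernel Z Z) [IsMarkovKernel T] (ε : ℝ≥0∞) (ρ : Measure Z)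
  [IsProbabilityMeasure ρ]
  (hdoeblin : ∀ z (A : Set Z), MeasurableSet A → ε * ρ A ≤ T z A)

include hdoeblin

lemma smul_le_bind (μ : Measure Z) : (ε * μ Set.univ) • ρ ≤ μ.bind T := by
  refine Measure.le_iff.2 fun A hA => ?_
  rw [Measure.smul_apply, smul_eq_mul, Measure.bind_apply hA T.measurable.aemeasurable]
  calc ε * μ Set.univ * ρ A = ∫⁻ _, ε * ρ A ∂μ := by
        rw [lintegral_const]; ring
    _ ≤ ∫⁻ z, T z A ∂μ := lintegral_mono fun z => hdoeblin z A hA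

lemma mass (hε1 : ε ≤ 1) (μ0 : Measure Z) (hμ0 : μ0 Set.univ = 1) (n : ℕ) :
    seq T ε ρ μ0 n Set.univ = (1 - ε) ^ n := by
  induction n with
  | zero => simpa [seq] using hμ0
  | succ n ih =>
    have hm : (1 - ε : ℝ≥0∞) ^ n ≤ 1 := pow_le_one' tsub_le_self n
    have hfin : IsFiniteMeasure ((ε * seq T ε ρ μ0 n Set.univ) • ρ) := by
      refine ⟨?_⟩
      rw [Measure.smul_apply, smul_eq_mul, ih, measure_univ, mul_one]
      exact lt_of_le_of_lt (mul_le_one' hε1 hm) ENNReal.one_lt_top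
    have hle := smul_le_bind T ε ρ hdoeblin (seq T ε ρ μ0 n)
    have hbu : (seq T ε ρ μ0 n).bind T Set.univ = (1 - ε) ^ n := by
      rw [Measure.bind_apply MeasurableSet.univ T.measurable.aemeasurable]
      simp [ih]
    show ((seq T ε ρ μ0 n).bind T - (ε * seq T ε ρ μ0 n Set.univ) • ρ) Set.univ = _
    rw [Measure.sub_apply MeasurableSet.univ hle, hbu, Measure.smul_apply, smul_eq_mul,
      ih, measure_univ, mul_one]
    have : ((1 : ℝ≥0∞) - ε) * (1 - ε) ^ n = 1 * (1 - ε) ^ n - ε * (1 - ε) ^ n :=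
      ENNReal.sub_mul (fun _ _ => (lt_of_le_of_lt hm ENNReal.one_lt_top).ne)
    rw [pow_succ, mul_comm ((1 - ε) ^ n) (1 - ε), this, one_mul]

lemma bind_eq (hε1 : ε ≤ 1) (μ0 : Measure Z) (hμ0 : μ0 Set.univ = 1) (n : ℕ) :
    (seq T ε ρ μ0 n).bind T
      = (ε * (1 - ε) ^ n) • ρ + seq T ε ρ μ0 (n + 1) := by
  have hm := mass T ε ρ hdoeblin hε1 μ0 hμ0 n
  have hfin : IsFiniteMeasure ((ε * seq T ε ρ μ0 n Set.univ) • ρ) := by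
    refine ⟨?_⟩
    rw [Measure.smul_apply, smul_eq_mul, hm, measure_univ, mul_one]
    exact lt_of_le_of_lt (mul_le_one' hε1 (pow_le_one' tsub_le_self n)) ENNReal.one_lt_top
  have hle := smul_le_bind T ε ρ hdoeblin (seq T ε ρ μ0 n)
  have := Measure.sub_add_cancel_of_le hle
  rw [add_comm] at this
  rw [← hm]
  exact this.symm

lemma geom_partial (hε1 : ε ≤ 1) (n : ℕ) :
    (∑ k ∈ Finset.range n, ε * (1 - ε) ^ k) + (1 - ε) ^ n = 1 := by
  induction n with
  | zero => simp
  | succ n ih =>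
    rw [Finset.sum_range_succ, pow_succ, add_assoc, mul_comm ((1 - ε) ^ n) (1 - ε),
      ← add_mul, add_tsub_cancel_of_le hε1, one_mul]
    exact ih

end DoeblinAux

/-- Existence and uniqueness part of Theorem 1: a Markov kernel satisfying a
Doeblin minorization condition `T(z)(A) ≥ ε · ρ(A)` has a unique invariant
probability measure. -/
theorem doeblin_exists_unique_invariant
    {Z : Type*} [MeasurableSpace Z] (T : Kernel Z Z) [IsMarkovKernel T]
    (ε : ℝ≥0∞) (hε0 : 0 < ε) (hε1 : ε ≤ 1)
    (ρ : Measure Z) [IsProbabilityMeasure ρ]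
    (hdoeblin : ∀ z (A : Set Z), MeasurableSet A → ε * ρ A ≤ T z A) :
    ∃! π : Measure Z, IsProbabilityMeasure π ∧ π.bind T = π := by
  classical
  set S : ℕ → Measure Z := DoeblinAux.seq T ε ρ ρ with hS
  have hεtop : ε ≠ ∞ := (lt_of_le_of_lt hε1 ENNReal.one_lt_top).ne
  have hmassS : ∀ n, S n Set.univ = (1 - ε) ^ n :=
    DoeblinAux.mass T ε ρ hdoeblin hε1 ρ measure_univ
  have hbindS : ∀ n, (S n).bind T = (ε * (1 - ε) ^ n) • ρ + S (n + 1) :=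
    DoeblinAux.bind_eq T ε ρ hdoeblin hε1 ρ measure_univ
  set π : Measure Z := ε • Measure.sum S with hπ
  have hπA : ∀ A : Set Z, MeasurableSet A → π A = ε * ∑' n, S n A := by
    intro A hA
    rw [hπ, Measure.smul_apply, smul_eq_mul, Measure.sum_apply _ hA]
  have hgeom : ∑' n : ℕ, (1 - ε : ℝ≥0∞) ^ n = ε⁻¹ := by
    rw [ENNReal.tsum_geometric, ENNReal.sub_sub_cancel ENNReal.one_ne_top hε1]
  have hprob : IsProbabilityMeasure π := by
    constructor
    rw [hπA Set.univ MeasurableSet.univ]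
    simp_rw [hmassS]
    rw [hgeom, ENNReal.mul_inv_cancel hε0.ne' hεtop]
  have hinv : π.bind T = π := by
    ext A hA
    have hb : π.bind T A = ε * ∑' n, ((S n).bind T) A := by
      rw [Measure.bind_apply hA T.measurable.aemeasurable, hπ, lintegral_smul_measure,
        lintegral_sum_measure]
      congr 1
      exact tsum_congr fun n => (Measure.bind_apply hA T.measurable.aemeasurable).symm
    rw [hb, hπA A hA]
    have h1 : ∀ n, ((S n).bind T) A = ε * (1 - ε) ^ n * ρ A + S (n + 1) A := by
      intro n
      rw [hbindS n, Measure.add_apply, Measure.smul_apply, smul_eq_mul]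
    simp_rw [h1]
    rw [ENNReal.tsum_add, ENNReal.tsum_mul_right, ENNReal.tsum_mul_left, hgeom,
      ENNReal.mul_inv_cancel hε0.ne' hεtop, one_mul,
      tsum_eq_zero_add' (f := fun n => S n A) ENNReal.summable]
    have hS0 : S 0 A = ρ A := rfl
    rw [hS0, add_comm (ρ A)]
  refine ⟨π, ⟨hprob, hinv⟩, ?_⟩
  rintro π' ⟨hprob', hinv'⟩
  set V : ℕ → Measure Z := DoeblinAux.seq T ε ρ π' with hV
  have hmassV : ∀ n, V n Set.univ = (1 - ε) ^ n :=
    DoeblinAux.mass T ε ρ hdoeblin hε1 π' measure_univ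
  have hbindV : ∀ n, (V n).bind T = (ε * (1 - ε) ^ n) • ρ + V (n + 1) :=
    DoeblinAux.bind_eq T ε ρ hdoeblin hε1 π' measure_univ
  have key : ∀ n, π' = ε • (∑ k ∈ Finset.range n, S k) + V n := by
    intro n
    induction n with
    | zero => simp [hV, DoeblinAux.seq]
    | succ n ih =>
      ext A hA
      have hπ'A : π' A = ∫⁻ z, T z A ∂π' := by
        conv_lhs => rw [← hinv']
        exact Measure.bind_apply hA T.measurable.aemeasurable
      rw [hπ'A]
      conv_lhs => rw [ih]
      rw [lintegral_add_measure, lintegral_smul_measure, lintegral_finset_sum_measure]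
      have hSk : ∀ k, ∫⁻ z, T z A ∂(S k) = ε * (1 - ε) ^ k * ρ A + S (k + 1) A := by
        intro k
        rw [← Measure.bind_apply hA T.measurable.aemeasurable, hbindS k, Measure.add_apply,
          Measure.smul_apply, smul_eq_mul]
      have hVn : ∫⁻ z, T z A ∂(V n) = ε * (1 - ε) ^ n * ρ A + V (n + 1) A := by
        rw [← Measure.bind_apply hA T.measurable.aemeasurable, hbindV n, Measure.add_apply,
          Measure.smul_apply, smul_eq_mul]
      simp_rw [hSk, hVn]
      rw [Measure.add_apply, Measure.smul_apply, smul_eq_mul, Measure.finset_sum_apply,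
        Finset.sum_range_succ' (fun k => S k A) n]
      have hS0 : S 0 A = ρ A := rfl
      rw [hS0, Finset.sum_add_distrib, ← Finset.sum_mul]
      have hgp := DoeblinAux.geom_partial T ε ρ hdoeblin hε1 n
      set a := ρ A
      set b := ∑ k ∈ Finset.range n, S (k + 1) A
      set v := V (n + 1) A
      set g := ∑ k ∈ Finset.range n, ε * (1 - ε) ^ k
      calc ε * (g * a + b) + (ε * (1 - ε) ^ n * a + v)
          = ε * ((g + (1 - ε) ^ n) * a) + (ε * b + v) := by ring
        _ = ε * (b + a) + v := by rw [hgp, one_mul]; ring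
  ext A hA
  have h1 : Tendsto (fun n => ε * ∑ k ∈ Finset.range n, S k A + V n A) atTop (𝓝 (π A)) := by
    have hs : Tendsto (fun n => ε * ∑ k ∈ Finset.range n, S k A) atTop
        (𝓝 (ε * ∑' k, S k A)) :=
      ENNReal.Tendsto.const_mul (ENNReal.tendsto_nat_tsum fun k => S k A) (Or.inr hεtop)
    have hv : Tendsto (fun n => V n A) atTop (𝓝 0) := by
      have hlt : (1 - ε : ℝ≥0∞) < 1 :=
        ENNReal.sub_lt_self ENNReal.one_ne_top one_ne_zero hε0.ne'
      refine tendsto_of_tendsto_of_tendsto_of_le_of_le tendsto_const_nhds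
        (ENNReal.tendsto_pow_atTop_nhds_zero_of_lt_one hlt) (fun n => zero_le)
        (fun n => ?_)
      calc V n A ≤ V n Set.univ := measure_mono (Set.subset_univ A)
        _ = (1 - ε) ^ n := hmassV n
    have h := hs.add hv
    rw [add_zero, ← hπA A hA] at h
    exact h
  have h2 : Tendsto (fun n => ε * ∑ k ∈ Finset.range n, S k A + V n A) atTop (𝓝 (π' A)) := by
    have heq : (fun n => ε * ∑ k ∈ Finset.range n, S k A + V n A) = fun _ => π' A := by
      funext n
      conv_rhs => rw [key n]
      rw [Measure.add_apply, Measure.smul_apply, smul_eq_mul, Measure.finset_sum_apply]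
    rw [heq]
    exact tendsto_const_nhds
  exact tendsto_nhds_unique h2 h1
end

section
/- Let Z be a measurable space and T : Z → Z a Markov kernel satisfying a Doeblin minorization condition with constant ε ∈ (0, 1] and probability measure ρ: T(z)(A) ≥ ε · ρ(A) for all z and measurable A. Let π be a T-invariant probability measure (π.bind T = π). Then for every probability measure μ₀ on Z and every n ≥ 0, ‖μ₀.bind Tⁿ − π‖_TV ≤ (1 − ε)ⁿ · ‖μ₀ − π‖_TV; in particular the distribution of the chain started from any initial distribution μ₀ converges to π in total variation as n → ∞. -/
open MeasureTheory ProbabilityTheory Filter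
open scoped ENNReal Topology

/-- Total variation distance between two measures:
`‖μ − ν‖_TV = sup { |μ(A) − ν(A)| : A measurable }`. -/
noncomputable def tvDist {Z : Type*} [MeasurableSpace Z] (μ ν : Measure Z) : ℝ≥0∞ :=
  ⨆ (A : Set Z) (_ : MeasurableSet A), max (μ A - ν A) (ν A - μ A)

lemma tvDist_comm {Z : Type*} [MeasurableSpace Z] (μ ν : Measure Z) :
    tvDist μ ν = tvDist ν μ := by
  unfold tvDist
  refine iSup_congr fun A => iSup_congr fun _ => max_comm _ _

lemma tvDist_le {Z : Type*} [MeasurableSpace Z] {μ ν : Measure Z} {c : ℝ≥0∞}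
    (h : ∀ A : Set Z, MeasurableSet A → μ A ≤ ν A + c ∧ ν A ≤ μ A + c) :
    tvDist μ ν ≤ c := by
  refine iSup_le fun A => iSup_le fun hA => ?_
  exact max_le (tsub_le_iff_right.2 ((h A hA).1.trans (by rw [add_comm])))
    (tsub_le_iff_right.2 ((h A hA).2.trans (by rw [add_comm])))

lemma le_tvDist {Z : Type*} [MeasurableSpace Z] (μ ν : Measure Z) {A : Set Z}
    (hA : MeasurableSet A) : μ A - ν A ≤ tvDist μ ν :=
  le_iSup₂_of_le A hA (le_max_left _ _)

lemma tvDist_le_one {Z : Type*} [MeasurableSpace Z] (μ ν : Measure Z)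
    [IsProbabilityMeasure μ] [IsProbabilityMeasure ν] : tvDist μ ν ≤ 1 := by
  refine iSup_le fun A => iSup_le fun hA => max_le ?_ ?_
  · exact le_trans (tsub_le_self.trans (measure_mono (Set.subset_univ A)))
      (le_of_eq measure_univ)
  · exact le_trans (tsub_le_self.trans (measure_mono (Set.subset_univ A)))
      (le_of_eq measure_univ)

/-- Key comparison: if `g ≤ L` then `∫ g dμ ≤ ∫ g dν + L * tvDist μ ν`. -/
lemma lintegral_le_lintegral_add {Z : Type*} [MeasurableSpace Z]
    (μ ν : Measure Z) [IsProbabilityMeasure μ] [IsProbabilityMeasure ν]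
    {g : Z → ℝ≥0∞} (hg : Measurable g) {L : ℝ≥0∞} (hgL : ∀ z, g z ≤ L) :
    ∫⁻ z, g z ∂μ ≤ ∫⁻ z, g z ∂ν + L * tvDist μ ν := by
  obtain ⟨S, hS, hS1, hS2⟩ := hahn_decomposition (μ := μ) (ν := ν)
  have hres : ν.restrict S ≤ μ.restrict S := by
    refine Measure.le_iff.2 fun t ht => ?_
    rw [Measure.restrict_apply ht, Measure.restrict_apply ht]
    exact hS1 _ (ht.inter hS) Set.inter_subset_right
  have hresc : μ.restrict Sᶜ ≤ ν.restrict Sᶜ := by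
    refine Measure.le_iff.2 fun t ht => ?_
    rw [Measure.restrict_apply ht, Measure.restrict_apply ht]
    exact hS2 _ (ht.inter hS.compl) Set.inter_subset_right
  set σ : Measure Z := μ.restrict S - ν.restrict S with hσ
  have hdecomp : μ.restrict S = σ + ν.restrict S := by
    rw [hσ, Measure.sub_add_cancel_of_le hres]
  have hσuniv : σ Set.univ ≤ tvDist μ ν := by
    rw [hσ, Measure.sub_apply MeasurableSet.univ hres,
      Measure.restrict_apply_univ, Measure.restrict_apply_univ]
    exact le_tvDist μ ν hS
  have hσint : ∫⁻ z, g z ∂σ ≤ L * tvDist μ ν := by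
    calc ∫⁻ z, g z ∂σ ≤ ∫⁻ _, L ∂σ := lintegral_mono hgL
    _ = L * σ Set.univ := lintegral_const _
    _ ≤ L * tvDist μ ν := mul_le_mul_right hσuniv _
  calc ∫⁻ z, g z ∂μ
      = ∫⁻ z, g z ∂(μ.restrict S) + ∫⁻ z, g z ∂(μ.restrict Sᶜ) := by
        rw [← lintegral_add_measure, Measure.restrict_add_restrict_compl hS]
    _ = ∫⁻ z, g z ∂σ + ∫⁻ z, g z ∂(ν.restrict S) + ∫⁻ z, g z ∂(μ.restrict Sᶜ) := by
        rw [hdecomp, lintegral_add_measure]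
    _ ≤ L * tvDist μ ν + ∫⁻ z, g z ∂(ν.restrict S) + ∫⁻ z, g z ∂(ν.restrict Sᶜ) := by
        exact add_le_add (add_le_add hσint le_rfl) (lintegral_mono' hresc le_rfl)
    _ = ∫⁻ z, g z ∂ν + L * tvDist μ ν := by
        rw [add_assoc, ← lintegral_add_measure, Measure.restrict_add_restrict_compl hS,
          add_comm]

section Contraction

variable {Z : Type*} [MeasurableSpace Z] (T : Kernel Z Z) [IsMarkovKernel T]
  (ε : ℝ≥0∞) (hε1 : ε ≤ 1) (ρ : Measure Z) [IsProbabilityMeasure ρ]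
  (hdoeblin : ∀ z (A : Set Z), MeasurableSet A → ε * ρ A ≤ T z A)

include hε1 hdoeblin in
lemma bind_apply_le (μ ν : Measure Z) [IsProbabilityMeasure μ] [IsProbabilityMeasure ν]
    {A : Set Z} (hA : MeasurableSet A) :
    (μ.bind T) A ≤ (ν.bind T) A + (1 - ε) * tvDist μ ν := by
  set g : Z → ℝ≥0∞ := fun z => T z A - ε * ρ A with hg
  have hgmeas : Measurable g := (T.measurable_coe hA).sub measurable_const
  have hgL : ∀ z, g z ≤ 1 - ε := by
    intro z
    have h1 : T z A + ε * ρ Aᶜ ≤ 1 := by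
      calc T z A + ε * ρ Aᶜ ≤ T z A + T z Aᶜ :=
            add_le_add le_rfl (hdoeblin z Aᶜ hA.compl)
      _ = T z Set.univ := measure_add_measure_compl hA
      _ = 1 := measure_univ
    have h2 : T z A ≤ 1 - ε * ρ Aᶜ := ENNReal.le_sub_of_add_le_right
      (ne_top_of_le_ne_top ENNReal.one_ne_top
        (le_trans (mul_le_mul' hε1 prob_le_one) (by simp))) h1
    calc g z = T z A - ε * ρ A := rfl
    _ ≤ (1 - ε * ρ Aᶜ) - ε * ρ A := tsub_le_tsub_right h2 _
    _ = 1 - (ε * ρ Aᶜ + ε * ρ A) := by rw [tsub_tsub]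
    _ = 1 - ε * (ρ Aᶜ + ρ A) := by rw [mul_add]
    _ = 1 - ε := by
        rw [add_comm, measure_add_measure_compl hA, measure_univ, mul_one]
  have hsplit : ∀ z, T z A = g z + ε * ρ A := by
    intro z
    rw [hg]
    exact (tsub_add_cancel_of_le (hdoeblin z A hA)).symm
  have hbind : ∀ (m : Measure Z) [IsProbabilityMeasure m],
      (m.bind T) A = ∫⁻ z, g z ∂m + ε * ρ A := by
    intro m _
    rw [Measure.bind_apply hA T.measurable.aemeasurable]
    calc ∫⁻ z, T z A ∂m = ∫⁻ z, (g z + ε * ρ A) ∂m := by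
          refine lintegral_congr fun z => hsplit z
    _ = ∫⁻ z, g z ∂m + ε * ρ A := by
        rw [lintegral_add_right _ measurable_const, lintegral_const, measure_univ, mul_one]
  rw [hbind μ, hbind ν]
  have := lintegral_le_lintegral_add μ ν hgmeas hgL
  calc ∫⁻ z, g z ∂μ + ε * ρ A ≤ (∫⁻ z, g z ∂ν + (1 - ε) * tvDist μ ν) + ε * ρ A :=
        add_le_add this le_rfl
  _ = (∫⁻ z, g z ∂ν + ε * ρ A) + (1 - ε) * tvDist μ ν := by ring

include hε1 hdoeblin in
lemma tvDist_bind_le (μ ν : Measure Z) [IsProbabilityMeasure μ] [IsProbabilityMeasure ν] :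
    tvDist (μ.bind T) (ν.bind T) ≤ (1 - ε) * tvDist μ ν := by
  refine tvDist_le fun A hA => ⟨bind_apply_le T ε hε1 ρ hdoeblin μ ν hA, ?_⟩
  have := bind_apply_le T ε hε1 ρ hdoeblin ν μ hA
  rwa [tvDist_comm ν μ] at this

end Contraction

instance kernelIter_isMarkovKernel {Z : Type*} [MeasurableSpace Z]
    (T : Kernel Z Z) [IsMarkovKernel T] (n : ℕ) : IsMarkovKernel (kernelIter T n) := by
  induction n with
  | zero => exact (inferInstance : IsMarkovKernel (Kernel.id (α := Z)))
  | succ n ih => exact (inferInstance : IsMarkovKernel (T ∘ₖ kernelIter T n))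

lemma isProbabilityMeasure_bind_kernel {Z : Type*} [MeasurableSpace Z]
    (μ : Measure Z) [IsProbabilityMeasure μ] (K : Kernel Z Z) [IsMarkovKernel K] :
    IsProbabilityMeasure (μ.bind K) := by
  constructor
  rw [Measure.bind_apply MeasurableSet.univ K.measurable.aemeasurable]
  simp [measure_univ]

lemma bind_kernelIter_succ {Z : Type*} [MeasurableSpace Z]
    (T : Kernel Z Z) (μ : Measure Z) (n : ℕ) :
    μ.bind (kernelIter T (n + 1)) = (μ.bind (kernelIter T n)).bind T := by
  have : ⇑(kernelIter T (n + 1)) = fun z => ((kernelIter T n) z).bind T := by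
    funext z
    rw [show kernelIter T (n + 1) = T ∘ₖ kernelIter T n from rfl, Kernel.comp_apply]
  rw [this, Measure.bind_bind (kernelIter T n).measurable.aemeasurable T.measurable.aemeasurable]

/-- Geometric-rate convergence of Theorem 1: under a Doeblin minorization
condition with constant `ε`, if `π` is `T`-invariant then for any initial
distribution `μ₀` and every `n`,
`‖μ₀ Tⁿ − π‖_TV ≤ (1 − ε)ⁿ ‖μ₀ − π‖_TV`; in particular the law of the chain
converges to `π` in total variation. -/
theorem doeblin_geometric_convergence
    {Z : Type*} [MeasurableSpace Z] (T : Kernel Z Z) [IsMarkovKernel T]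
    (ε : ℝ≥0∞) (hε0 : 0 < ε) (hε1 : ε ≤ 1)
    (ρ : Measure Z) [IsProbabilityMeasure ρ]
    (hdoeblin : ∀ z (A : Set Z), MeasurableSet A → ε * ρ A ≤ T z A)
    (π : Measure Z) [IsProbabilityMeasure π] (hπ : π.bind T = π) :
    ∀ (μ₀ : Measure Z), IsProbabilityMeasure μ₀ →
      (∀ n : ℕ, tvDist (μ₀.bind (kernelIter T n)) π ≤ (1 - ε) ^ n * tvDist μ₀ π) ∧
      Tendsto (fun n : ℕ => tvDist (μ₀.bind (kernelIter T n)) π) atTop (𝓝 0) := by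
  intro μ₀ hμ₀
  have hprob : ∀ n : ℕ, IsProbabilityMeasure (μ₀.bind (kernelIter T n)) := by
    intro n
    exact isProbabilityMeasure_bind_kernel μ₀ (kernelIter T n)
  have hbound : ∀ n : ℕ, tvDist (μ₀.bind (kernelIter T n)) π ≤ (1 - ε) ^ n * tvDist μ₀ π := by
    intro n
    induction n with
    | zero =>
      have : μ₀.bind (kernelIter T 0) = μ₀ := by
        have : ⇑(kernelIter T 0) = Measure.dirac := by
          funext z
          rw [show kernelIter T 0 = Kernel.id from rfl, Kernel.id_apply]
        rw [this, Measure.bind_dirac]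
      rw [this, pow_zero, one_mul]
    | succ n ih =>
      have hpn := hprob n
      calc tvDist (μ₀.bind (kernelIter T (n + 1))) π
          = tvDist ((μ₀.bind (kernelIter T n)).bind T) (π.bind T) := by
            rw [bind_kernelIter_succ, hπ]
      _ ≤ (1 - ε) * tvDist (μ₀.bind (kernelIter T n)) π :=
            tvDist_bind_le T ε hε1 ρ hdoeblin _ _
      _ ≤ (1 - ε) * ((1 - ε) ^ n * tvDist μ₀ π) := mul_le_mul_right ih _
      _ = (1 - ε) ^ (n + 1) * tvDist μ₀ π := by ring
  refine ⟨hbound, ?_⟩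
  have hlt : (1 : ℝ≥0∞) - ε < 1 :=
    ENNReal.sub_lt_self ENNReal.one_ne_top one_ne_zero hε0.ne'
  have hpow : Tendsto (fun n : ℕ => (1 - ε) ^ n) atTop (𝓝 0) :=
    ENNReal.tendsto_pow_atTop_nhds_zero_of_lt_one hlt
  refine tendsto_of_tendsto_of_tendsto_of_le_of_le tendsto_const_nhds hpow
    (fun n => zero_le) (fun n => ?_)
  calc tvDist (μ₀.bind (kernelIter T n)) π ≤ (1 - ε) ^ n * tvDist μ₀ π := hbound n
  _ ≤ (1 - ε) ^ n * 1 := by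
      have := hprob 0
      exact mul_le_mul_right (tvDist_le_one μ₀ π) _
  _ = (1 - ε) ^ n := mul_one _
end
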